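/- Let û = (ρ̂,ŵ) be a classical solution of the gas flow system with parameters ε̂, γ̂, satisfying assumptions (A1)–(A2), with ∂_τŵ and ∂_xŵ in L^∞(0,T;L²(0,ℓ)). Define the residual ê = (ê₁, ê₂) with ê₁ = 0 and ê₂ = (ε² − ε̂²)(∂_τŵ + (1/2)∂_x|ŵ|²) + (γ − γ̂)|ŵ|ŵ. Then the perturbation functional P(ê) = C₁‖ê₁‖²_{L²} + C₂‖ê₂‖²_{L²} + C₃‖ê₂‖^{3/2}_{L^{3/2}} satisfies P(ê) ≤ Ĉ₃' |ε² − ε̂²|^{3/2} + Ĉ₃'' |γ − γ̂|^{3/2}, with constants Ĉ₃', Ĉ₃'' depending only on the bounds in (A1)–(A2) and on ‖∂_τŵ‖_{L^∞(0,T;L²)} and ‖∂_xŵ‖_{L^∞(0,T;L²)}. -/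

import Mathlib

lemma aux_two_rpow : (2:ℝ) ^ ((3:ℝ)/2) ≤ 3 := by
  have h1 : (2:ℝ) ^ ((3:ℝ)/2) = ((2:ℝ)^(3:ℕ)) ^ ((1:ℝ)/2) := by
    rw [← Real.rpow_natCast (2:ℝ) 3, ← Real.rpow_mul (by norm_num)]
    norm_num
  rw [h1, ← Real.sqrt_eq_rpow]
  have : Real.sqrt ((2:ℝ)^(3:ℕ)) ≤ Real.sqrt 9 := Real.sqrt_le_sqrt (by norm_num)
  calc Real.sqrt ((2:ℝ)^(3:ℕ)) ≤ Real.sqrt 9 := this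
    _ = 3 := by rw [show (9:ℝ) = 3^2 by norm_num, Real.sqrt_sq (by norm_num)]

lemma aux_sum_rpow (s t : ℝ) (hs : 0 ≤ s) (ht : 0 ≤ t) :
    (s + t) ^ ((3:ℝ)/2) ≤ 3 * (s ^ ((3:ℝ)/2) + t ^ ((3:ℝ)/2)) := by
  rcases le_total s t with h | h
  · have h1 : (s+t) ^ ((3:ℝ)/2) ≤ (2*t) ^ ((3:ℝ)/2) :=
      Real.rpow_le_rpow (by linarith) (by linarith) (by norm_num)
    have h2 : (2*t) ^ ((3:ℝ)/2) = (2:ℝ)^((3:ℝ)/2) * t ^ ((3:ℝ)/2) :=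
      Real.mul_rpow (by norm_num) ht
    have h3 : (0:ℝ) ≤ t ^ ((3:ℝ)/2) := Real.rpow_nonneg ht _
    have h4 : (0:ℝ) ≤ s ^ ((3:ℝ)/2) := Real.rpow_nonneg hs _
    nlinarith [aux_two_rpow]
  · have h1 : (s+t) ^ ((3:ℝ)/2) ≤ (2*s) ^ ((3:ℝ)/2) :=
      Real.rpow_le_rpow (by linarith) (by linarith) (by norm_num)
    have h2 : (2*s) ^ ((3:ℝ)/2) = (2:ℝ)^((3:ℝ)/2) * s ^ ((3:ℝ)/2) :=
      Real.mul_rpow (by norm_num) hs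
    have h3 : (0:ℝ) ≤ t ^ ((3:ℝ)/2) := Real.rpow_nonneg ht _
    have h4 : (0:ℝ) ≤ s ^ ((3:ℝ)/2) := Real.rpow_nonneg hs _
    nlinarith [aux_two_rpow]

lemma aux_rpow32_le (t : ℝ) (ht : 0 ≤ t) : t ^ ((3:ℝ)/2) ≤ 1 + t^2 := by
  rcases le_total t 1 with h | h
  · have := Real.rpow_le_one ht h (by norm_num : (0:ℝ) ≤ (3:ℝ)/2)
    nlinarith [sq_nonneg t]
  · have h1 : t ^ ((3:ℝ)/2) ≤ t ^ ((2:ℝ)) := Real.rpow_le_rpow_of_exponent_le h (by norm_num)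
    have h2 : t ^ ((2:ℝ)) = t ^ (2:ℕ) := by
      rw [show ((2:ℝ)) = ((2:ℕ):ℝ) by norm_num, Real.rpow_natCast]
    calc t ^ ((3:ℝ)/2) ≤ t ^ ((2:ℝ)) := h1
      _ = t ^ (2:ℕ) := h2
      _ ≤ 1 + t ^ (2:ℕ) := by linarith

lemma aux_sq_le (A c : ℝ) (hA : 0 ≤ A) (hc : 0 ≤ c) (h : A ≤ c^2) :
    A^2 ≤ c * A ^ ((3:ℝ)/2) := by
  have h1 : A ^ ((1:ℝ)/2) ≤ (c^2) ^ ((1:ℝ)/2) := Real.rpow_le_rpow hA h (by norm_num)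
  have h2 : (c^2) ^ ((1:ℝ)/2) = c := by
    rw [← Real.rpow_natCast c 2, ← Real.rpow_mul hc]; norm_num
  have h3 : A^2 = A ^ ((1:ℝ)/2) * A ^ ((3:ℝ)/2) := by
    rw [← Real.rpow_add' hA (by norm_num : (1:ℝ)/2 + 3/2 ≠ 0)]
    rw [show (1:ℝ)/2 + 3/2 = (2:ℕ) by norm_num, Real.rpow_natCast]
  rw [h3]
  exact mul_le_mul_of_nonneg_right (h1.trans h2.le) (Real.rpow_nonneg hA _)

lemma aux_pow3 (b : ℝ) (hb : 0 ≤ b) : (b^2) ^ ((3:ℝ)/2) = b^3 := by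
  rw [← Real.rpow_natCast b 2, ← Real.rpow_mul hb]
  have : ((2:ℕ):ℝ) * (3/2) = ((3:ℕ):ℝ) := by norm_num
  rw [this, Real.rpow_natCast]

lemma aux_integral (ℓ c1 c2 c3 : ℝ) (f g : ℝ → ℝ) (hf : Continuous f) (hg : Continuous g) :
    (∫ x in (0:ℝ)..ℓ, (c1 * f x ^ 2 + c2 * g x ^ 2 + c3))
      = c1 * (∫ x in (0:ℝ)..ℓ, f x ^ 2) + c2 * (∫ x in (0:ℝ)..ℓ, g x ^ 2) + c3 * ℓ := by
  have h1 : IntervalIntegrable (fun x => c1 * f x ^ 2) MeasureTheory.volume 0 ℓ :=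
    (by fun_prop : Continuous fun x => c1 * f x ^ 2).intervalIntegrable _ _
  have h2 : IntervalIntegrable (fun x => c2 * g x ^ 2) MeasureTheory.volume 0 ℓ :=
    (by fun_prop : Continuous fun x => c2 * g x ^ 2).intervalIntegrable _ _
  have h3 : IntervalIntegrable (fun _ : ℝ => c3) MeasureTheory.volume 0 ℓ :=
    intervalIntegrable_const
  rw [intervalIntegral.integral_add (h1.add h2) h3, intervalIntegral.integral_add h1 h2,
    intervalIntegral.integral_const_mul, intervalIntegral.integral_const_mul,
    intervalIntegral.integral_const]
  simp [smul_eq_mul]; ring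

lemma aux_pt2 (a b t s w wbar : ℝ) (hw : |w| ≤ wbar) :
    (a*(t + w*s) + b*(|w| *w))^2
      ≤ 4*a^2 * t^2 + (4*a^2*wbar^2) * s^2 + 2*b^2*wbar^4 := by
  have hw2 : w^2 ≤ wbar^2 := by nlinarith [sq_abs w, abs_nonneg w]
  have hwbar2 : (0:ℝ) ≤ wbar^2 := by nlinarith [sq_abs w, abs_nonneg w, sq_nonneg w]
  have hv2 : (|w| *w)^2 = w^2*w^2 := by rw [mul_pow, sq_abs]
  nlinarith [sq_nonneg (a*(t+w*s) - b*(|w| *w)),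
    sq_nonneg (a*t - a*(w*s)),
    mul_le_mul_of_nonneg_left (mul_le_mul_of_nonneg_right hw2 (sq_nonneg s)) (sq_nonneg a),
    mul_le_mul_of_nonneg_left (mul_le_mul hw2 hw2 (sq_nonneg w) hwbar2) (sq_nonneg b)]

lemma aux_pt3 (a b t s w wbar : ℝ) (hwbar : 0 ≤ wbar) (hw : |w| ≤ wbar) :
    |a*(t + w*s) + b*(|w| *w)| ^ ((3:ℝ)/2)
      ≤ (6*|a| ^ ((3:ℝ)/2)) * t^2 + (6*|a| ^ ((3:ℝ)/2)*wbar^2) * s^2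
        + (3*|a| ^ ((3:ℝ)/2) + 3*|b| ^ ((3:ℝ)/2)*wbar^3) := by
  have hw2 : w^2 ≤ wbar^2 := by nlinarith [sq_abs w, abs_nonneg w]
  set g := t + w*s with hg
  set P := |a| ^ ((3:ℝ)/2) with hP
  set Q := |b| ^ ((3:ℝ)/2) with hQ
  have hP0 : 0 ≤ P := Real.rpow_nonneg (abs_nonneg _) _
  have hQ0 : 0 ≤ Q := Real.rpow_nonneg (abs_nonneg _) _
  clear_value g P Q
  have h1 : abs (a*g + b*(|w| *w)) ≤ |a| *|g| + |b| *wbar^2 := by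
    calc abs (a*g + b*(|w| *w)) ≤ abs (a*g) + abs (b*(|w| *w)) := abs_add_le _ _
      _ = |a| *|g| + |b| *(|w| *|w|) := by rw [abs_mul, abs_mul, abs_mul, abs_abs]
      _ ≤ |a| *|g| + |b| *wbar^2 := by
          have h : |w| *|w| ≤ wbar^2 := by nlinarith [abs_nonneg w]
          nlinarith [abs_nonneg b]
  have h2 : (abs (a*g + b*(|w| *w))) ^ ((3:ℝ)/2) ≤ (|a| *|g| + |b| *wbar^2) ^ ((3:ℝ)/2) :=
    Real.rpow_le_rpow (abs_nonneg _) h1 (by norm_num)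
  have h3 : (|a| *|g| + |b| *wbar^2) ^ ((3:ℝ)/2)
      ≤ 3 * ((|a| *|g|) ^ ((3:ℝ)/2) + (|b| *wbar^2) ^ ((3:ℝ)/2)) :=
    aux_sum_rpow _ _ (by positivity) (by positivity)
  have h4 : (|a| *|g|) ^ ((3:ℝ)/2) = P * |g| ^ ((3:ℝ)/2) := by
    rw [Real.mul_rpow (abs_nonneg _) (abs_nonneg _), hP]
  have h5 : |g| ^ ((3:ℝ)/2) ≤ 1 + g^2 := by
    have := aux_rpow32_le |g| (abs_nonneg _)
    rwa [sq_abs] at this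
  have h6 : (|b| *wbar^2) ^ ((3:ℝ)/2) = Q * wbar^3 := by
    rw [Real.mul_rpow (abs_nonneg _) (sq_nonneg _), aux_pow3 wbar hwbar, hQ]
  have h7 : g^2 ≤ 2*t^2 + 2*wbar^2*s^2 := by
    rw [hg]
    nlinarith [sq_nonneg (t - w*s), mul_le_mul_of_nonneg_right hw2 (sq_nonneg s)]
  have h8 : P * |g| ^ ((3:ℝ)/2) ≤ P * (1 + (2*t^2 + 2*wbar^2*s^2)) :=
    mul_le_mul_of_nonneg_left (by linarith) hP0
  calc (abs (a*g + b*(|w| *w))) ^ ((3:ℝ)/2)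
      ≤ 3 * ((|a| *|g|) ^ ((3:ℝ)/2) + (|b| *wbar^2) ^ ((3:ℝ)/2)) := h2.trans h3
    _ = 3 * (P * |g| ^ ((3:ℝ)/2)) + 3 * (Q * wbar^3) := by rw [h4, h6]; ring
    _ ≤ 3 * (P * (1 + (2*t^2 + 2*wbar^2*s^2))) + 3 * (Q * wbar^3) := by linarith
    _ = (6*P) * t^2 + (6*P*wbar^2) * s^2 + (3*P + 3*Q*wbar^3) := by ring

set_option maxHeartbeats 1000000

/-- bound for the perturbation functional
`P(ê) = C₁‖ê₁‖²_{L²} + C₂‖ê₂‖²_{L²} + C₃‖ê₂‖^{3/2}_{L^{3/2}}` of the residual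
`ê₁ = 0`, `ê₂ = (ε² − ε̂²)(∂_τŵ + ½∂_x|ŵ|²) + (γ − γ̂)|ŵ|ŵ`:
`P(ê) ≤ Ĉ₃' |ε² − ε̂²|^{3/2} + Ĉ₃'' |γ − γ̂|^{3/2}`, with constants depending
only on the bounds in (A1)–(A2), the constants of condition (C3), and the
`L^∞(0,T;L²)` norms of `∂_τŵ` and `∂_xŵ`. -/
theorem residual_perturbation_functional_bound
    (ℓ : ℝ) (hℓ : 0 < ℓ)
    (wbar εbar γlo γhi Mt Mx : ℝ)
    (hwbar : 0 < wbar) (hεbar : 0 < εbar) (hγlo : 0 < γlo) (hγγ : γlo ≤ γhi)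
    (hMt : 0 ≤ Mt) (hMx : 0 ≤ Mx)
    -- the constants of the perturbation bound in condition (C3)
    (C1 C2 C3 : ℝ) (hC1 : 0 ≤ C1) (hC2 : 0 ≤ C2) (hC3 : 0 ≤ C3) :
    ∃ C3' C3'' : ℝ, 0 ≤ C3' ∧ 0 ≤ C3'' ∧
      ∀ (ε εh γ γh : ℝ) (wh wht whx eh2 : ℝ → ℝ),
        0 ≤ ε → ε ≤ εbar → 0 ≤ εh → εh ≤ εbar →
        γlo ≤ γ → γ ≤ γhi → γlo ≤ γh → γh ≤ γhi →
        Continuous wh → Continuous wht → Continuous whx →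
        -- ŵ is a bounded classical solution profile: |ŵ| ≤ w̄, ∂_xŵ = whx
        (∀ x ∈ Set.Icc (0:ℝ) ℓ, |wh x| ≤ wbar) →
        (∀ x : ℝ, HasDerivAt wh (whx x) x) →
        -- bounds on ‖∂_τŵ‖_{L^∞(0,T;L²)} and ‖∂_xŵ‖_{L^∞(0,T;L²)}
        (∫ x in (0:ℝ)..ℓ, (wht x) ^ 2) ≤ Mt ^ 2 →
        (∫ x in (0:ℝ)..ℓ, (whx x) ^ 2) ≤ Mx ^ 2 →
        -- the residual ê₂ = (ε² − ε̂²)(∂_τŵ + ½∂_x|ŵ|²) + (γ − γ̂)|ŵ|ŵ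
        (∀ x : ℝ, eh2 x
            = (ε ^ 2 - εh ^ 2) * (wht x + wh x * whx x)
              + (γ - γh) * (|wh x| * wh x)) →
        C1 * (∫ x in (0:ℝ)..ℓ, ((0:ℝ)) ^ 2)
            + C2 * (∫ x in (0:ℝ)..ℓ, (eh2 x) ^ 2)
            + C3 * (∫ x in (0:ℝ)..ℓ, |eh2 x| ^ ((3:ℝ) / 2))
          ≤ C3' * |ε ^ 2 - εh ^ 2| ^ ((3:ℝ) / 2)
            + C3'' * |γ - γh| ^ ((3:ℝ) / 2) := by
  refine ⟨C2 * (4 * εbar * (Mt^2 + wbar^2 * Mx^2)) + C3 * (3*ℓ + 6*Mt^2 + 6*wbar^2*Mx^2),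
    C2 * (2 * Real.sqrt γhi * wbar^4 * ℓ) + C3 * (3 * wbar^3 * ℓ),
    by positivity, by positivity, ?_⟩
  intro ε εh γ γh wh wht whx eh2 hε0 hεb hεh0 hεhb hγ1 hγ2 hγh1 hγh2
    hcwh hcwht hcwhx hwb _hderiv hSt hSx heh2
  have hA0 : (0:ℝ) ≤ |ε ^ 2 - εh ^ 2| := abs_nonneg _
  have hB0 : (0:ℝ) ≤ |γ - γh| := abs_nonneg _
  have hAb : |ε ^ 2 - εh ^ 2| ≤ εbar ^ 2 := by
    rw [abs_sub_le_iff]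
    constructor <;> nlinarith [sq_nonneg ε, sq_nonneg εh]
  have hBb : |γ - γh| ≤ γhi := by
    rw [abs_sub_le_iff]
    constructor <;> linarith
  have hP0 : (0:ℝ) ≤ |ε ^ 2 - εh ^ 2| ^ ((3:ℝ)/2) := Real.rpow_nonneg hA0 _
  have hQ0 : (0:ℝ) ≤ |γ - γh| ^ ((3:ℝ)/2) := Real.rpow_nonneg hB0 _
  have hA2 : |ε ^ 2 - εh ^ 2| ^ 2 ≤ εbar * |ε ^ 2 - εh ^ 2| ^ ((3:ℝ)/2) :=
    aux_sq_le _ εbar hA0 hεbar.le hAb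
  have hγhi0 : (0:ℝ) ≤ γhi := le_trans hγlo.le hγγ
  have hB2 : |γ - γh| ^ 2 ≤ Real.sqrt γhi * |γ - γh| ^ ((3:ℝ)/2) :=
    aux_sq_le _ (Real.sqrt γhi) hB0 (Real.sqrt_nonneg _)
      (by rw [Real.sq_sqrt hγhi0]; exact hBb)
  have hceh2 : Continuous eh2 := by
    have he : eh2 = fun x => (ε ^ 2 - εh ^ 2) * (wht x + wh x * whx x)
        + (γ - γh) * (|wh x| * wh x) := funext heh2
    rw [he]; continuity
  have hSt0 : 0 ≤ ∫ x in (0:ℝ)..ℓ, (wht x) ^ 2 :=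
    intervalIntegral.integral_nonneg hℓ.le (fun x _ => sq_nonneg _)
  have hSx0 : 0 ≤ ∫ x in (0:ℝ)..ℓ, (whx x) ^ 2 :=
    intervalIntegral.integral_nonneg hℓ.le (fun x _ => sq_nonneg _)
  set A : ℝ := |ε ^ 2 - εh ^ 2| with hA
  set B : ℝ := |γ - γh| with hB
  set P : ℝ := A ^ ((3:ℝ)/2) with hP
  set Q : ℝ := B ^ ((3:ℝ)/2) with hQ
  clear_value A B P Q
  -- bound for the L² integral
  have hI2 : (∫ x in (0:ℝ)..ℓ, (eh2 x) ^ 2)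
      ≤ 4 * εbar * (Mt^2 + wbar^2*Mx^2) * P + 2 * Real.sqrt γhi * wbar^4 * ℓ * Q := by
    have hmono : (∫ x in (0:ℝ)..ℓ, (eh2 x) ^ 2)
        ≤ ∫ x in (0:ℝ)..ℓ, ((4*(ε ^ 2 - εh ^ 2)^2) * (wht x)^2
            + (4*(ε ^ 2 - εh ^ 2)^2*wbar^2) * (whx x)^2 + 2*(γ - γh)^2*wbar^4) := by
      apply intervalIntegral.integral_mono_on hℓ.le
        ((hceh2.pow 2).intervalIntegrable _ _)
        ((by fun_prop : Continuous fun x => (4*(ε ^ 2 - εh ^ 2)^2) * (wht x)^2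
            + (4*(ε ^ 2 - εh ^ 2)^2*wbar^2) * (whx x)^2
            + 2*(γ - γh)^2*wbar^4).intervalIntegrable _ _)
      intro x hx
      rw [Pi.pow_apply, heh2 x]
      have := aux_pt2 (ε ^ 2 - εh ^ 2) (γ - γh) (wht x) (whx x) (wh x) wbar (hwb x hx)
      linarith
    rw [aux_integral ℓ _ _ _ wht whx hcwht hcwhx] at hmono
    have hA2' : (ε ^ 2 - εh ^ 2)^2 ≤ εbar * P := by
      rw [← sq_abs (ε ^ 2 - εh ^ 2), ← hA]; exact hA2
    have hB2' : (γ - γh)^2 ≤ Real.sqrt γhi * Q := by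
      rw [← sq_abs (γ - γh), ← hB]; exact hB2
    have hA2'0 : (0:ℝ) ≤ (ε ^ 2 - εh ^ 2)^2 := sq_nonneg _
    have hB2'0 : (0:ℝ) ≤ (γ - γh)^2 := sq_nonneg _
    have e1 : (4*(ε ^ 2 - εh ^ 2)^2) * (∫ x in (0:ℝ)..ℓ, (wht x)^2)
        ≤ 4 * ((εbar * P) * Mt^2) := by
      have h := mul_le_mul hA2' hSt hSt0 (by positivity : (0:ℝ) ≤ εbar * P)
      linarith
    have e2 : (4*(ε ^ 2 - εh ^ 2)^2*wbar^2) * (∫ x in (0:ℝ)..ℓ, (whx x)^2)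
        ≤ 4 * ((εbar * P) * Mx^2) * wbar^2 := by
      have h := mul_le_mul hA2' hSx hSx0 (by positivity : (0:ℝ) ≤ εbar * P)
      nlinarith [sq_nonneg wbar]
    have e3 : 2*(γ - γh)^2*wbar^4 * ℓ ≤ 2*(Real.sqrt γhi * Q)*wbar^4*ℓ := by
      have h4 : (0:ℝ) ≤ wbar^4 * ℓ := by positivity
      nlinarith [mul_le_mul_of_nonneg_right hB2' h4]
    have hfin : 4 * ((εbar * P) * Mt^2) + 4 * ((εbar * P) * Mx^2) * wbar^2
          + 2*(Real.sqrt γhi * Q)*wbar^4*ℓ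
        = 4 * εbar * (Mt^2 + wbar^2*Mx^2) * P + 2 * Real.sqrt γhi * wbar^4 * ℓ * Q := by
      ring
    linarith [hmono, e1, e2, e3, hfin.le, hfin.ge]
  -- bound for the L^{3/2} integral
  have hI3 : (∫ x in (0:ℝ)..ℓ, |eh2 x| ^ ((3:ℝ)/2))
      ≤ (3*ℓ + 6*Mt^2 + 6*wbar^2*Mx^2) * P + 3*wbar^3*ℓ * Q := by
    have hmono : (∫ x in (0:ℝ)..ℓ, |eh2 x| ^ ((3:ℝ)/2))
        ≤ ∫ x in (0:ℝ)..ℓ, ((6*P) * (wht x)^2 + (6*P*wbar^2) * (whx x)^2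
            + (3*P + 3*Q*wbar^3)) := by
      apply intervalIntegral.integral_mono_on hℓ.le
        ((hceh2.abs.rpow_const (fun x => Or.inr (by norm_num))).intervalIntegrable _ _)
        ((by fun_prop : Continuous fun x => (6*P) * (wht x)^2 + (6*P*wbar^2) * (whx x)^2
            + (3*P + 3*Q*wbar^3)).intervalIntegrable _ _)
      intro x hx
      rw [heh2 x]
      have h := aux_pt3 (ε ^ 2 - εh ^ 2) (γ - γh) (wht x) (whx x) (wh x) wbar
        hwbar.le (hwb x hx)
      rw [← hA, ← hB, ← hP, ← hQ] at h
      linarith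
    rw [aux_integral ℓ _ _ _ wht whx hcwht hcwhx] at hmono
    have e1 : (6*P) * (∫ x in (0:ℝ)..ℓ, (wht x)^2) ≤ 6*P*Mt^2 := by
      have h := mul_le_mul_of_nonneg_left hSt (by positivity : (0:ℝ) ≤ 6*P)
      linarith
    have e2 : (6*P*wbar^2) * (∫ x in (0:ℝ)..ℓ, (whx x)^2) ≤ 6*P*wbar^2*Mx^2 := by
      have h := mul_le_mul_of_nonneg_left hSx (by positivity : (0:ℝ) ≤ 6*P*wbar^2)
      linarith
    have hfin : 6*P*Mt^2 + 6*P*wbar^2*Mx^2 + (3*P + 3*Q*wbar^3) * ℓ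
        = (3*ℓ + 6*Mt^2 + 6*wbar^2*Mx^2) * P + 3*wbar^3*ℓ * Q := by ring
    linarith [hmono, e1, e2, hfin.le, hfin.ge]
  have hzero : (∫ x in (0:ℝ)..ℓ, ((0:ℝ)) ^ 2) = 0 := by simp
  rw [hzero, mul_zero, zero_add]
  have b2 := mul_le_mul_of_nonneg_left hI2 hC2
  have b3 := mul_le_mul_of_nonneg_left hI3 hC3
  have hfin : C2 * (4 * εbar * (Mt^2 + wbar^2*Mx^2) * P + 2 * Real.sqrt γhi * wbar^4 * ℓ * Q)
        + C3 * ((3*ℓ + 6*Mt^2 + 6*wbar^2*Mx^2) * P + 3*wbar^3*ℓ * Q)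
      = (C2 * (4 * εbar * (Mt^2 + wbar^2 * Mx^2)) + C3 * (3*ℓ + 6*Mt^2 + 6*wbar^2*Mx^2)) * P
        + (C2 * (2 * Real.sqrt γhi * wbar^4 * ℓ) + C3 * (3 * wbar^3 * ℓ)) * Q := by ring
  linarith [b2, b3, hfin.le, hfin.ge]
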